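/- If a tree T and a connected unicyclic graph G, both on n ≥ 3 vertices, have at least ⌊n/2⌋ + 2 common cards, then there exists a common card T − v ≅ G − w with deg_T(v) = 1. -/

import Mathlib

open SimpleGraph

/-- The vertex-deleted subgraph `G - v`: the induced subgraph on the remaining vertices. -/
def deleteVert {V : Type*} (G : SimpleGraph V) (v : V) : SimpleGraph {w : V // w ≠ v} :=
  G.induce {w : V | w ≠ v}

/-- `G` contains a cycle. -/
def HasCycleG {V : Type*} (G : SimpleGraph V) : Prop :=
  ∃ (u : V) (c : G.Walk u u), c.IsCycle

/-- `G` contains at least two distinct cycles (distinct as subgraphs,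
i.e. with different edge sets). -/
def TwoCycles {V : Type*} (G : SimpleGraph V) : Prop :=
  ∃ (u v : V) (c : G.Walk u u) (c' : G.Walk v v),
    c.IsCycle ∧ c'.IsCycle ∧ ¬ (∀ e, e ∈ c.edges ↔ e ∈ c'.edges)

/-- `G` contains exactly one cycle: it has a cycle, and any two cycles are equal
as subgraphs (have the same edge set). -/
def Unicyclic {V : Type*} (G : SimpleGraph V) : Prop :=
  HasCycleG G ∧ ∀ (u v : V) (c : G.Walk u u) (c' : G.Walk v v),
    c.IsCycle → c'.IsCycle → ∀ e, e ∈ c.edges ↔ e ∈ c'.edges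

/-- `F` and `G` have at least `k` common cards, i.e. the multiset intersection of their
decks has size at least `k`: there are `k` distinct vertices of `F` and `k` distinct
vertices of `G` whose corresponding vertex-deleted subgraphs are pairwise isomorphic. -/
def CommonCards {V W : Type*} (F : SimpleGraph V) (G : SimpleGraph W) (k : ℕ) : Prop :=
  ∃ (f : Fin k ↪ V) (g : Fin k ↪ W),
    ∀ i, Nonempty (deleteVert F (f i) ≃g deleteVert G (g i))


section Aux
open Finset

private lemma natCard_congr_iso {V W : Type*} {G : SimpleGraph V} {H : SimpleGraph W}
    (e : G ≃g H) : Nat.card G.edgeSet = Nat.card H.edgeSet :=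
  Nat.card_congr e.mapEdgeSet

private lemma degree_pos_of_connected {V : Type*} [Fintype V] {G : SimpleGraph V}
    (hGc : G.Connected) (hcard : 2 ≤ Fintype.card V) (v : V) [Fintype (G.neighborSet v)] :
    0 < G.degree v := by
  obtain ⟨u, hu⟩ := Fintype.exists_ne_of_one_lt_card (by omega) v
  obtain ⟨p⟩ := hGc.preconnected v u
  cases p with
  | nil => exact absurd rfl hu.symm
  | cons h q => exact (G.degree_pos_iff_exists_adj v).2 ⟨_, h⟩

private lemma edgeCount_deleteVert {V : Type*} [Fintype V] [DecidableEq V]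
    (G : SimpleGraph V) [DecidableRel G.Adj] (v : V) :
    Nat.card (deleteVert G v).edgeSet + G.degree v = Nat.card G.edgeSet := by
  classical
  have h1 : Nat.card G.edgeSet = G.edgeFinset.card := by
    rw [Nat.card_eq_fintype_card]; exact (edgeFinset_card (G:=G)).symm
  have h2 : Nat.card (deleteVert G v).edgeSet = (deleteVert G v).edgeFinset.card := by
    rw [Nat.card_eq_fintype_card]; exact (edgeFinset_card (G:=deleteVert G v)).symm
  rw [h1, h2]
  have hsplit := Finset.card_filter_add_card_filter_not
    (s := G.edgeFinset) (p := fun e => v ∈ e)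
  have hdeg : (G.edgeFinset.filter (fun e => v ∈ e)).card = G.degree v := by
    rw [← G.incidenceFinset_eq_filter v, G.card_incidenceFinset_eq_degree]
  have hbij : ((deleteVert G v).edgeFinset).card
      = (G.edgeFinset.filter (fun e => ¬ v ∈ e)).card := by
    apply Finset.card_bij (fun e _ => Sym2.map Subtype.val e)
    · intro e he
      induction e with
      | _ a b =>
        simp only [mem_edgeFinset, mem_edgeSet] at he
        simp only [Sym2.map_pair_eq, mem_filter, mem_edgeFinset, mem_edgeSet, Sym2.mem_iff]
        exact ⟨he, by push_neg; exact ⟨fun h => a.2 h.symm, fun h => b.2 h.symm⟩⟩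
    · intro e1 h1 e2 h2 heq
      exact Sym2.map.injective Subtype.val_injective heq
    · intro e he
      induction e with
      | _ a b =>
        simp only [mem_filter, mem_edgeFinset, mem_edgeSet, Sym2.mem_iff] at he
        push_neg at he
        obtain ⟨hadj, ha, hb⟩ := he
        refine ⟨s(⟨a, ha.symm⟩, ⟨b, hb.symm⟩), ?_, by simp⟩
        exact mem_edgeFinset.2 (by simpa [deleteVert] using hadj)
  omega

private lemma reachable_deleteEdges_of_walk {V : Type*} {G : SimpleGraph V} {e : Sym2 V}
    (hbase : ∀ x y : V, e = s(x, y) → (G.deleteEdges {e}).Reachable x y)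
    {a b : V} (p : G.Walk a b) : (G.deleteEdges {e}).Reachable a b := by
  induction p with
  | nil => exact Reachable.refl _
  | cons h q ih =>
    rename_i x y z
    refine Reachable.trans ?_ ih
    by_cases hxy : s(x, y) = e
    · exact hbase x y hxy.symm
    · exact Adj.reachable (by simp [deleteEdges_adj, h, hxy])

private lemma unicyclic_edge_count {W : Type*} [Fintype W] (G : SimpleGraph W)
    [DecidableRel G.Adj] (hGc : G.Connected) (hGu : Unicyclic G) :
    Nat.card G.edgeSet = Fintype.card W := by
  classical
  obtain ⟨⟨u, c, hc⟩, huniq⟩ := hGu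
  obtain ⟨e, he⟩ : ∃ e, e ∈ c.edges := by
    cases c with
    | nil => exact absurd rfl hc.ne_nil
    | cons h q => exact ⟨_, List.mem_cons_self⟩
  set G' := G.deleteEdges {e} with hG'
  have hle : G' ≤ G := by
    intro a b hab; exact (deleteEdges_adj.1 hab).1
  have hbase : ∀ x y : W, e = s(x, y) → G'.Reachable x y := by
    intro x y hxy
    have : G.Adj x y ∧ (G \ fromEdgeSet {s(x, y)}).Reachable x y :=
      (adj_and_reachable_delete_edges_iff_exists_cycle).2 ⟨u, c, hc, hxy ▸ he⟩
    rw [hG', hxy]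
    exact this.2
  have hconn : G'.Connected := by
    rw [connected_iff]
    refine ⟨fun a b => ?_, hGc.nonempty⟩
    obtain ⟨p⟩ := hGc.preconnected a b
    exact reachable_deleteEdges_of_walk hbase p
  have hacyc : G'.IsAcyclic := by
    intro v' p hp
    have hsub : ∀ e' ∈ p.edges, e' ∈ G.edgeSet :=
      fun e' he' => edgeSet_mono hle (p.edges_subset_edgeSet he')
    have hq : (p.transfer G hsub).IsCycle := hp.transfer hsub
    have hmem : e ∈ p.edges := by
      rw [← p.edges_transfer hsub]
      exact (huniq u v' c (p.transfer G hsub) hc hq e).1 he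
    have := p.edges_subset_edgeSet hmem
    rw [hG'] at this
    rw [edgeSet_deleteEdges] at this
    exact this.2 rfl
  have htree : G'.IsTree := ⟨hconn, hacyc⟩
  have hcard : G'.edgeFinset.card + 1 = Fintype.card W := htree.card_edgeFinset
  have heG : e ∈ G.edgeFinset := mem_edgeFinset.2 (c.edges_subset_edgeSet he)
  have hdel : G'.edgeFinset = G.edgeFinset \ {e} := by
    have := G.edgeFinset_deleteEdges ({e} : Finset (Sym2 W))
    convert this using 3 <;> simp
  have : Nat.card G.edgeSet = G.edgeFinset.card := by
    rw [Nat.card_eq_fintype_card]; exact (edgeFinset_card (G:=G)).symm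
  rw [this]
  rw [hdel, card_sdiff_of_subset (by simpa using heG)] at hcard
  rw [card_singleton] at hcard
  have h1 : 1 ≤ G.edgeFinset.card := card_pos.2 ⟨e, heG⟩
  omega

end Aux

/-- If a tree `T` and a connected unicyclic graph `G`, both on `n ≥ 3`
vertices, have at least `⌊n/2⌋ + 2` common cards, then some common card
`T - v ≅ G - w` has `deg_T(v) = 1`. -/
theorem stmt4 {V W : Type*} [Fintype V] [Fintype W]
    (T : SimpleGraph V) (G : SimpleGraph W) [DecidableRel T.Adj]
    (n : ℕ) (hnV : Fintype.card V = n) (hnW : Fintype.card W = n) (hn3 : 3 ≤ n)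
    (hT : T.IsTree) (hGc : G.Connected) (hGu : Unicyclic G)
    (hcc : CommonCards T G (n / 2 + 2)) :
    ∃ (v : V) (w : W), Nonempty (deleteVert T v ≃g deleteVert G w) ∧ T.degree v = 1 := by
  classical
  by_contra hcon
  push_neg at hcon
  set k := n / 2 + 2 with hk
  obtain ⟨f, g, hfg⟩ := hcc
  have hTedge : Nat.card T.edgeSet + 1 = n := by
    have h := hT.card_edgeFinset
    rw [Nat.card_eq_fintype_card, ← edgeFinset_card (G:=T)]
    omega
  have hGedge : Nat.card G.edgeSet = n := by
    rw [unicyclic_edge_count G hGc hGu, hnW]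
  have hdeg : ∀ i, G.degree (g i) = T.degree (f i) + 1 := by
    intro i
    obtain ⟨iso⟩ := hfg i
    have h1 := edgeCount_deleteVert T (f i)
    have h2 := edgeCount_deleteVert G (g i)
    have h3 := natCard_congr_iso iso
    omega
  have hdegT : ∀ i, 2 ≤ T.degree (f i) := by
    intro i
    have h1 : 0 < T.degree (f i) :=
      degree_pos_of_connected hT.isConnected (by omega) (f i)
    have h2 : T.degree (f i) ≠ 1 := fun h => hcon (f i) (g i) (hfg i) h
    omega
  have hdegG : ∀ i, 3 ≤ G.degree (g i) := by
    intro i; have := hdeg i; have := hdegT i; omega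
  set S : Finset W := Finset.univ.image g with hS
  have hScard : S.card = k := by
    rw [hS, Finset.card_image_of_injective _ g.injective, Finset.card_univ, Fintype.card_fin]
  have hsum : ∑ w, G.degree w = 2 * n := by
    rw [G.sum_degrees_eq_twice_card_edges]
    rw [← hGedge, Nat.card_eq_fintype_card, ← edgeFinset_card (G:=G)]
  have hsumS : 3 * k ≤ ∑ w ∈ S, G.degree w := by
    have h := Finset.card_nsmul_le_sum S (fun w => G.degree w) 3 (fun w hw => by
      obtain ⟨i, _, rfl⟩ := Finset.mem_image.1 hw
      exact hdegG i)
    rwa [hScard, smul_eq_mul, mul_comm] at h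
  have hsumC : n - k ≤ ∑ w ∈ Sᶜ, G.degree w := by
    have h := Finset.card_nsmul_le_sum Sᶜ (fun w => G.degree w) 1 (fun w hw =>
      degree_pos_of_connected hGc (by omega) w)
    rwa [Finset.card_compl, hScard, hnW, smul_eq_mul, mul_one] at h
  have hsplit : ∑ w ∈ S, G.degree w + ∑ w ∈ Sᶜ, G.degree w = ∑ w, G.degree w :=
    Finset.sum_add_sum_compl S _
  omega
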